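/- Let v : ℝ → ℝ be the indicator function of the interval [0,1] (v(t) = 1 for t ∈ [0,1] and v(t) = 0 otherwise). Then for every z ∈ L¹(ℝ) with ‖z‖₁ ≤ 1, one has ∫_ℝ v(t)·(v(t) − (z∗v)(t)) dt > 0 (strict inequality). -/

import Mathlib

open MeasureTheory Set

noncomputable def conv (z w : ℝ → ℝ) : ℝ → ℝ := fun t => ∫ s, z s * w (t - s)

namespace IndicatorAux

noncomputable def V : ℝ → ℝ := Set.indicator (Icc (0:ℝ) 1) (fun _ => (1:ℝ))

lemma V_nonneg (t : ℝ) : 0 ≤ V t := Set.indicator_nonneg (fun _ _ => zero_le_one) t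

lemma V_le_one (t : ℝ) : V t ≤ 1 := by
  by_cases h : t ∈ Icc (0:ℝ) 1 <;> simp [V, h]

lemma V_meas : Measurable V := measurable_const.indicator measurableSet_Icc

lemma V_int : Integrable V := by
  rw [V, integrable_indicator_iff measurableSet_Icc]
  exact integrableOn_const (by simp) (by simp)

lemma integral_V : ∫ t, V t = 1 := by
  rw [V, integral_indicator_const _ measurableSet_Icc]
  simp

lemma V_mul_self (t : ℝ) : V t * V t = V t := by
  by_cases h : t ∈ Icc (0:ℝ) 1 <;> simp [V, h]

noncomputable def φ : ℝ → ℝ := fun s => max (min 1 (1 + s) - max 0 s) 0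

lemma φ_cont : Continuous φ := by unfold φ; fun_prop

lemma φ_nonneg (s : ℝ) : 0 ≤ φ s := le_max_right _ _

lemma φ_le_one (s : ℝ) : φ s ≤ 1 := by
  have h2 := min_le_left 1 (1+s)
  have h4 : (0:ℝ) ≤ max 0 s := le_max_left _ _
  exact max_le (by linarith) zero_le_one

lemma φ_lt_one {s : ℝ} (hs : s ≠ 0) : φ s < 1 := by
  have h2 := min_le_left 1 (1+s)
  have h3 := min_le_right 1 (1+s)
  have h4 : (0:ℝ) ≤ max 0 s := le_max_left _ _
  have h5 : s ≤ max 0 s := le_max_right _ _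
  refine max_lt ?_ zero_lt_one
  rcases lt_or_gt_of_ne hs with h | h
  · linarith
  · linarith

lemma V_mul_V (s t : ℝ) :
    V t * V (t - s) = Set.indicator (Icc (max 0 s) (min 1 (1 + s))) (fun _ => (1:ℝ)) t := by
  have hmem : (t - s ∈ Icc (0:ℝ) 1) ↔ t ∈ Icc s (1+s) := by
    simp only [mem_Icc]
    constructor <;> rintro ⟨a, b⟩ <;> constructor <;> linarith
  have hint : t ∈ Icc (max 0 s) (min 1 (1+s)) ↔ (t ∈ Icc (0:ℝ) 1 ∧ t ∈ Icc s (1+s)) := by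
    simp only [mem_Icc, max_le_iff, le_min_iff]
    tauto
  simp only [V, indicator]
  by_cases h1 : t ∈ Icc (0:ℝ) 1 <;> by_cases h2 : t ∈ Icc s (1+s) <;>
    simp [h1, h2, hmem, hint]

lemma phi_eq (s : ℝ) : (∫ t, V t * V (t - s)) = φ s := by
  simp only [V_mul_V s]
  rw [integral_indicator_const _ measurableSet_Icc, Real.volume_real_Icc, smul_eq_mul, mul_one]
  rfl

end IndicatorAux

open IndicatorAux in
theorem indicator_strict_positivity
    (v : ℝ → ℝ) (hv : v = Set.indicator (Icc (0:ℝ) 1) (fun _ => (1:ℝ))) :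
    ∀ z : ℝ → ℝ, Integrable z → (∫ t, |z t|) ≤ 1 →
      0 < ∫ t, v t * (v t - conv z v t) := by
  intro z hz hz1
  have hvV : v = V := hv
  subst hvV
  -- measurable representative of z
  set z' : ℝ → ℝ := hz.1.mk z with hz'def
  have hz'm : StronglyMeasurable z' := hz.1.stronglyMeasurable_mk
  have hzz' : z =ᵐ[volume] z' := hz.1.ae_eq_mk
  have hz'int : Integrable z' := hz.congr hzz'
  have hz'absm : StronglyMeasurable (fun s => |z' s|) := hz'm.measurable.abs.stronglyMeasurable
  have habs1 : (∫ s, |z' s|) ≤ 1 := by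
    have : (∫ s, |z s|) = ∫ s, |z' s| :=
      integral_congr_ae (hzz'.mono fun s h => by simp [h])
    linarith
  have habsnn : (0:ℝ) ≤ ∫ s, |z' s| := integral_nonneg fun s => abs_nonneg _
  have hconv : conv z V = conv z' V := by
    funext t
    exact integral_congr_ae (hzz'.mono fun s h => by simp [h])
  -- measurability of convolutions
  have convMeas : ∀ u : ℝ → ℝ, StronglyMeasurable u → StronglyMeasurable (conv u V) := by
    intro u hu
    have h : StronglyMeasurable (fun p : ℝ × ℝ => u p.2 * V (p.1 - p.2)) :=
      (hu.comp_measurable measurable_snd).mul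
        ((V_meas.comp (measurable_fst.sub measurable_snd)).stronglyMeasurable)
    exact h.integral_prod_right'
  -- integrability of slices
  have hInt_s : ∀ (u : ℝ → ℝ), Integrable u → StronglyMeasurable u → ∀ t : ℝ,
      Integrable (fun s => u s * V (t - s)) := by
    intro u hu hum t
    refine hu.mono ((hum.mul ((V_meas.comp (measurable_const.sub measurable_id)).stronglyMeasurable)).aestronglyMeasurable) ?_
    refine Filter.Eventually.of_forall fun s => ?_
    simp only [norm_mul, Real.norm_eq_abs]
    calc |u s| * |V (t - s)| ≤ |u s| * 1 := by
          refine mul_le_mul_of_nonneg_left ?_ (abs_nonneg _)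
          rw [abs_of_nonneg (V_nonneg _)]; exact V_le_one _
      _ = |u s| := mul_one _
  -- uniform bound on convolutions
  have hconv_abs : ∀ (u : ℝ → ℝ), Integrable u → StronglyMeasurable u → ∀ t : ℝ,
      |conv u V t| ≤ ∫ s, |u s| := by
    intro u hu hum t
    have h0 : |conv u V t| ≤ ∫ s, ‖u s * V (t - s)‖ := by
      rw [show conv u V t = ∫ s, u s * V (t - s) from rfl, ← Real.norm_eq_abs]
      exact norm_integral_le_integral_norm _
    calc |conv u V t| ≤ ∫ s, ‖u s * V (t - s)‖ := h0
      _ ≤ ∫ s, |u s| := by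
          refine integral_mono (hInt_s u hu hum t).norm hu.abs fun s => ?_
          simp only [norm_mul, Real.norm_eq_abs]
          calc |u s| * |V (t - s)| ≤ |u s| * 1 := by
                refine mul_le_mul_of_nonneg_left ?_ (abs_nonneg _)
                rw [abs_of_nonneg (V_nonneg _)]; exact V_le_one _
            _ = |u s| := mul_one _
  -- integrability of V * conv u V
  have hVconv : ∀ (u : ℝ → ℝ), Integrable u → StronglyMeasurable u →
      Integrable (fun t => V t * conv u V t) := by
    intro u hu hum
    have hb : Integrable (fun t => V t * ∫ s, |u s|) := V_int.mul_const _
    refine hb.mono ((V_meas.stronglyMeasurable.mul (convMeas u hum)).aestronglyMeasurable) ?_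
    refine Filter.Eventually.of_forall fun t => ?_
    simp only [norm_mul, Real.norm_eq_abs]
    rw [abs_of_nonneg (V_nonneg t),
      abs_of_nonneg (integral_nonneg fun s => abs_nonneg (u s))]
    exact mul_le_mul_of_nonneg_left (hconv_abs u hu hum t) (V_nonneg t)
  have hVconv_int : Integrable (fun t => V t * conv z' V t) := hVconv z' hz'int hz'm
  have hVg_int : Integrable (fun t => V t * conv (fun s => |z' s|) V t) :=
    hVconv _ hz'int.abs hz'absm
  -- split the target integral
  have hsplit : (∫ t, V t * (V t - conv z V t)) = 1 - ∫ t, V t * conv z' V t := by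
    rw [hconv]
    have he : (fun t => V t * (V t - conv z' V t)) = fun t => V t - V t * conv z' V t := by
      funext t; rw [mul_sub, V_mul_self]
    rw [he, integral_sub V_int hVconv_int, integral_V]
  -- pointwise comparison with the absolute convolution
  have hconv_le : ∀ t, conv z' V t ≤ conv (fun s => |z' s|) V t := by
    intro t
    refine integral_mono (hInt_s z' hz'int hz'm t) (hInt_s _ hz'int.abs hz'absm t) fun s => ?_
    exact mul_le_mul_of_nonneg_right (le_abs_self _) (V_nonneg _)
  -- Fubini
  have hIint : Integrable (fun s => |z' s| * φ s) := by
    refine hz'int.abs.mono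
      ((hz'm.measurable.abs.mul φ_cont.measurable).stronglyMeasurable.aestronglyMeasurable) ?_
    refine Filter.Eventually.of_forall fun s => ?_
    simp only [norm_mul, Real.norm_eq_abs, abs_abs]
    rw [abs_of_nonneg (φ_nonneg s)]
    exact mul_le_of_le_one_right (abs_nonneg _) (φ_le_one s)
  have hfub : (∫ t, V t * conv (fun s => |z' s|) V t) = ∫ s, |z' s| * φ s := by
    have hFm : StronglyMeasurable (fun p : ℝ × ℝ => V p.1 * (|z' p.2| * V (p.1 - p.2))) := by
      refine ((V_meas.comp measurable_fst).stronglyMeasurable).mul ?_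
      exact ((hz'm.measurable.abs.comp measurable_snd).mul
        (V_meas.comp (measurable_fst.sub measurable_snd))).stronglyMeasurable
    have hFnn : ∀ p : ℝ × ℝ, 0 ≤ V p.1 * (|z' p.2| * V (p.1 - p.2)) := fun p =>
      mul_nonneg (V_nonneg _) (mul_nonneg (abs_nonneg _) (V_nonneg _))
    have hnorm : ∀ t : ℝ, (∫ s, ‖V t * (|z' s| * V (t - s))‖) =
        V t * conv (fun s => |z' s|) V t := by
      intro t
      have h1 : ∀ s : ℝ, ‖V t * (|z' s| * V (t - s))‖ = V t * (|z' s| * V (t - s)) := fun s => by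
        rw [Real.norm_eq_abs, abs_of_nonneg (hFnn (t, s))]
      simp_rw [h1]
      rw [integral_const_mul]
      rfl
    have hF : Integrable (fun p : ℝ × ℝ => V p.1 * (|z' p.2| * V (p.1 - p.2)))
        (volume.prod volume) := by
      refine (integrable_prod_iff hFm.aestronglyMeasurable).2 ⟨?_, ?_⟩
      · refine Filter.Eventually.of_forall fun t => ?_
        exact (hInt_s _ hz'int.abs hz'absm t).const_mul (V t)
      · refine hVg_int.congr ?_
        refine Filter.Eventually.of_forall fun t => ?_
        exact (hnorm t).symm
    have hswap := integral_integral_swap (f := fun t s => V t * (|z' s| * V (t - s))) hF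
    have hL : (∫ t, ∫ s, V t * (|z' s| * V (t - s))) =
        ∫ t, V t * conv (fun s => |z' s|) V t := by
      congr 1; funext t; rw [integral_const_mul]; rfl
    have hR : (∫ s, ∫ t, V t * (|z' s| * V (t - s))) = ∫ s, |z' s| * φ s := by
      congr 1; funext s
      have h2 : ∀ t : ℝ, V t * (|z' s| * V (t - s)) = |z' s| * (V t * V (t - s)) := fun t => by
        ring
      simp_rw [h2]
      rw [integral_const_mul, phi_eq]
    rw [← hL, hswap, hR]
  -- the key strict inequality
  have hIlt : (∫ s, |z' s| * φ s) < 1 := by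
    have hle : (∫ s, |z' s| * φ s) ≤ ∫ s, |z' s| :=
      integral_mono hIint hz'int.abs fun s =>
        mul_le_of_le_one_right (abs_nonneg _) (φ_le_one s)
    rcases eq_or_lt_of_le habsnn with h0 | h0
    · linarith
    · have hsupp : 0 < volume (Function.support fun s => |z' s|) :=
        (integral_pos_iff_support_of_nonneg (fun s => abs_nonneg _) hz'int.abs).1 h0
      set f : ℝ → ℝ := fun s => |z' s| * (1 - φ s) with hf
      have hfint : Integrable f := by
        have he : f = fun s => |z' s| - |z' s| * φ s := by funext s; simp [hf]; ring
        rw [he]; exact hz'int.abs.sub hIint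
      have hfnn : ∀ s, 0 ≤ f s := fun s =>
        mul_nonneg (abs_nonneg _) (by linarith [φ_le_one s])
      have hfsupp : (Function.support fun s => |z' s|) \ {0} ⊆ Function.support f := by
        rintro s ⟨hs1, hs2⟩
        have h1 : |z' s| ≠ 0 := hs1
        have hs0 : s ≠ 0 := by simpa using hs2
        have h2 : (1 : ℝ) - φ s ≠ 0 := ne_of_gt (by linarith [φ_lt_one hs0])
        exact mul_ne_zero h1 h2
      have hpos : 0 < volume (Function.support f) := by
        refine lt_of_lt_of_le ?_ (measure_mono hfsupp)
        rw [measure_diff_null (Real.volume_singleton)]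
        exact hsupp
      have hfpos : 0 < ∫ s, f s := (integral_pos_iff_support_of_nonneg hfnn hfint).2 hpos
      have hdiff : (∫ s, f s) = (∫ s, |z' s|) - ∫ s, |z' s| * φ s := by
        rw [← integral_sub hz'int.abs hIint]
        congr 1; funext s; simp [hf]; ring
      linarith
  -- conclude
  rw [hsplit]
  have h1 : (∫ t, V t * conv z' V t) ≤ ∫ t, V t * conv (fun s => |z' s|) V t :=
    integral_mono hVconv_int hVg_int fun t =>
      mul_le_mul_of_nonneg_left (hconv_le t) (V_nonneg t)
  rw [hfub] at h1
  linarith
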